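/- For all real t > 0, the quantity C(t) = t²(e^t + 1)²/((t² + 4)(e^t - 1)²) satisfies 0 < C(t) < 1. -/

import Mathlib

theorem C_x_in_unit_interval (t : ℝ) (ht : 0 < t) :
    0 < t ^ 2 * (Real.exp t + 1) ^ 2 / ((t ^ 2 + 4) * (Real.exp t - 1) ^ 2) ∧
    t ^ 2 * (Real.exp t + 1) ^ 2 / ((t ^ 2 + 4) * (Real.exp t - 1) ^ 2) < 1 := by
  have hE : 1 < Real.exp t := by
    have := Real.add_one_lt_exp (ne_of_gt ht)
    linarith
  have hsinh : t / 2 < Real.sinh (t / 2) := Real.self_lt_sinh_iff.mpr (by linarith)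
  rw [Real.sinh_eq] at hsinh
  have hexp : Real.exp (t/2) * Real.exp (t/2) = Real.exp t := by
    rw [← Real.exp_add]; ring_nf
  have hpos : 0 < Real.exp (t/2) := Real.exp_pos _
  have hneg : Real.exp (-(t/2)) = (Real.exp (t/2))⁻¹ := Real.exp_neg _
  -- t * exp(t/2) < exp t - 1
  have key : t * Real.exp (t/2) < Real.exp t - 1 := by
    have h1 : t < Real.exp (t/2) - (Real.exp (t/2))⁻¹ := by
      rw [hneg] at hsinh; linarith
    have h2 : t * Real.exp (t/2) < (Real.exp (t/2) - (Real.exp (t/2))⁻¹) * Real.exp (t/2) :=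
      mul_lt_mul_of_pos_right h1 hpos
    calc t * Real.exp (t/2) < (Real.exp (t/2) - (Real.exp (t/2))⁻¹) * Real.exp (t/2) := h2
      _ = Real.exp t - 1 := by field_simp [hexp]; rw [← hexp]; ring
  have key2 : t ^ 2 * Real.exp t < (Real.exp t - 1) ^ 2 := by
    have hl : 0 < t * Real.exp (t/2) := mul_pos ht hpos
    nlinarith [sq_nonneg (Real.exp t - 1 - t * Real.exp (t/2))]
  have hden : 0 < (t ^ 2 + 4) * (Real.exp t - 1) ^ 2 :=
    mul_pos (by positivity) (pow_pos (by linarith) 2)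
  constructor
  · apply div_pos _ hden
    positivity
  · rw [div_lt_one hden]
    nlinarith [Real.exp_pos t]
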